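/- Let G be a finitely generated free abelian group (written multiplicatively) and let g, h ∈ G be elements such that the subgroup generated by g and h has rank 2. Then the elements (1 − g) and (1 − h) are relatively prime in the group ring ℤ[G]. -/

import Mathlib

open MonoidAlgebra Finsupp

/-- In a monoid algebra over a linearly ordered commutative group with coefficients in a
ring without zero divisors, any divisor of a nonzero "single" term is itself a single term. -/
private lemma eq_single_of_mul_eq_single {R Γ : Type*} [CommRing R] [NoZeroDivisors R]
    [CommGroup Γ] [LinearOrder Γ] [IsOrderedMonoid Γ]
    {P Q : MonoidAlgebra R Γ} {n : Γ} {r : R} (hr : r ≠ 0)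
    (hPQ : P * Q = MonoidAlgebra.single n r) :
    ∃ (a : Γ) (p : R), P = MonoidAlgebra.single a p := by
  classical
  have hP : P ≠ 0 := by
    rintro rfl
    rw [zero_mul] at hPQ
    exact hr (by simpa using (MonoidAlgebra.single_eq_zero.mp hPQ.symm))
  have hQ : Q ≠ 0 := by
    rintro rfl
    rw [mul_zero] at hPQ
    exact hr (by simpa using (MonoidAlgebra.single_eq_zero.mp hPQ.symm))
  have hPs : P.coeff.support.Nonempty := Finsupp.support_nonempty_iff.mpr (MonoidAlgebra.coeff_eq_zero.not.mpr hP)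
  have hQs : Q.coeff.support.Nonempty := Finsupp.support_nonempty_iff.mpr (MonoidAlgebra.coeff_eq_zero.not.mpr hQ)
  set a := P.coeff.support.max' hPs with ha
  set b := Q.coeff.support.max' hQs with hb
  set a' := P.coeff.support.min' hPs with ha'
  set b' := Q.coeff.support.min' hQs with hb'
  have keymax : (P * Q).coeff (a * b) = P.coeff a * Q.coeff b := by
    apply MonoidAlgebra.coeff_mul_mul_of_uniqueMul
    intro x y hx hy hxy
    have h1 : x ≤ a := Finset.le_max' _ x hx
    have h2 : y ≤ b := Finset.le_max' _ y hy
    rcases h1.lt_or_eq with h1' | h1'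
    · exact absurd hxy (ne_of_lt (mul_lt_mul_of_lt_of_le h1' h2))
    rcases h2.lt_or_eq with h2' | h2'
    · exact absurd hxy (ne_of_lt (mul_lt_mul_of_le_of_lt h1 h2'))
    exact ⟨h1', h2'⟩
  have keymin : (P * Q).coeff (a' * b') = P.coeff a' * Q.coeff b' := by
    apply MonoidAlgebra.coeff_mul_mul_of_uniqueMul
    intro x y hx hy hxy
    have h1 : a' ≤ x := Finset.min'_le _ x hx
    have h2 : b' ≤ y := Finset.min'_le _ y hy
    rcases h1.lt_or_eq with h1' | h1'
    · exact absurd hxy (ne_of_gt (mul_lt_mul_of_lt_of_le h1' h2))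
    rcases h2.lt_or_eq with h2' | h2'
    · exact absurd hxy (ne_of_gt (mul_lt_mul_of_le_of_lt h1 h2'))
    exact ⟨h1'.symm, h2'.symm⟩
  have hPa : P.coeff a ≠ 0 := Finsupp.mem_support_iff.mp (Finset.max'_mem _ hPs)
  have hQb : Q.coeff b ≠ 0 := Finsupp.mem_support_iff.mp (Finset.max'_mem _ hQs)
  have hPa' : P.coeff a' ≠ 0 := Finsupp.mem_support_iff.mp (Finset.min'_mem _ hPs)
  have hQb' : Q.coeff b' ≠ 0 := Finsupp.mem_support_iff.mp (Finset.min'_mem _ hQs)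
  have hab : a * b = n := by
    by_contra hne
    rw [hPQ, MonoidAlgebra.coeff_single, Finsupp.single_apply, if_neg (fun e => hne e.symm)] at keymax
    exact mul_ne_zero hPa hQb keymax.symm
  have hab' : a' * b' = n := by
    by_contra hne
    rw [hPQ, MonoidAlgebra.coeff_single, Finsupp.single_apply, if_neg (fun e => hne e.symm)] at keymin
    exact mul_ne_zero hPa' hQb' keymin.symm
  have haa : a = a' := by
    have h1 : a' ≤ a := Finset.min'_le _ _ (Finset.max'_mem _ hPs)
    have h2 : b' ≤ b := Finset.min'_le _ _ (Finset.max'_mem _ hQs)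
    have e : a * b' ≤ a' * b' := by
      calc a * b' ≤ a * b := mul_le_mul_right h2 a
      _ = a' * b' := hab.trans hab'.symm
    have : a ≤ a' := le_of_mul_le_mul_right' e
    exact le_antisymm this h1
  refine ⟨a, P.coeff a, ?_⟩
  ext s
  rcases eq_or_ne s a with rfl | hs
  · simp
  rw [MonoidAlgebra.coeff_single, Finsupp.single_apply, if_neg (fun e => hs e.symm)]
  by_contra hPs0
  have hmem : s ∈ P.coeff.support := Finsupp.mem_support_iff.mpr hPs0
  have l1 : s ≤ a := Finset.le_max' _ _ hmem
  have l2 : a' ≤ s := Finset.min'_le _ _ hmem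
  rw [← haa] at l2
  exact hs (le_antisymm l1 l2)

/-- Let `G` be a finitely generated free abelian group (written
multiplicatively) and `g h : G` generate a rank-2 subgroup (i.e. they are
multiplicatively independent).  Then `1 - g` and `1 - h` are relatively prime in
the integral group ring `ℤ[G]`. -/
theorem veering_relprime_one_sub
    (G : Type) [CommGroup G]
    [Module.Free ℤ (Additive G)] [Module.Finite ℤ (Additive G)]
    (g h : G) (hrank : ∀ a b : ℤ, g ^ a * h ^ b = 1 → a = 0 ∧ b = 0) :
    IsRelPrime ((1 : MonoidAlgebra ℤ G) - MonoidAlgebra.of ℤ G g)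
      ((1 : MonoidAlgebra ℤ G) - MonoidAlgebra.of ℤ G h) := by
  classical
  let ι := Module.Free.ChooseBasisIndex ℤ (Additive G)
  let b : Module.Basis ι ℤ (Additive G) := Module.Free.chooseBasis ℤ (Additive G)
  let u : ι →₀ ℤ := b.repr (Additive.ofMul g)
  let v : ι →₀ ℤ := b.repr (Additive.ofMul h)
  have hind : ∀ a c : ℤ, a • u + c • v = 0 → a = 0 ∧ c = 0 := by
    intro a c hac
    apply hrank a c
    have h0 : a • Additive.ofMul g + c • Additive.ofMul h = 0 := by
      apply b.repr.injective
      simpa [u, v, map_add] using hac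
    have := congrArg Additive.toMul h0
    simpa [toMul_add, toMul_zsmul] using this
  -- find a nonvanishing 2x2 minor
  have hminor : ∃ i j, u i * v j ≠ u j * v i := by
    by_contra hc
    push_neg at hc
    have hu : u ≠ 0 := by
      intro h0
      have := hind 1 0 (by simp [h0])
      exact one_ne_zero this.1
    obtain ⟨i0, hi0⟩ := Finsupp.ne_iff.mp hu
    have hrel : (v i0) • u + (-(u i0)) • v = 0 := by
      ext j
      simp only [Finsupp.add_apply, Finsupp.smul_apply, smul_eq_mul, Finsupp.coe_zero,
        Pi.zero_apply]
      nlinarith [hc i0 j]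
    have := hind (v i0) (-(u i0)) hrel
    exact hi0 (by simpa using neg_eq_zero.mp this.2)
  obtain ⟨i, j, hij⟩ := hminor
  -- the degree function
  let deg : G → ℤ := fun x =>
    u j * (b.repr (Additive.ofMul x)) i - u i * (b.repr (Additive.ofMul x)) j
  have degmul : ∀ x y : G, deg (x * y) = deg x + deg y := by
    intro x y
    have : Additive.ofMul (x * y) = Additive.ofMul x + Additive.ofMul y := rfl
    simp only [deg, this, map_add, Finsupp.add_apply]
    ring
  have degg : deg g = 0 := by simp only [deg]; ring
  have degh : deg h ≠ 0 := by
    simp only [deg]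
    intro hdh
    apply hij
    nlinarith [hdh]
  -- G has unique products, so ℤ[G] has no zero divisors
  letI : UniqueProds G := by
    refine UniqueProds.of_injective_mulHom
      (MonoidHom.mk' (fun x : G => Multiplicative.ofAdd (b.repr (Additive.ofMul x)))
        (fun x y => by
          have : Additive.ofMul (x * y) = Additive.ofMul x + Additive.ofMul y := rfl
          simp [this, map_add])).toMulHom ?_ inferInstance
    intro x y hxy
    simpa using b.repr.injective (Multiplicative.ofAdd.injective hxy)
  haveI : NoZeroDivisors (MonoidAlgebra ℤ G) := inferInstance
  -- the auxiliary algebra A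
  let R := MonoidAlgebra ℤ G
  let A := MonoidAlgebra (MonoidAlgebra ℤ G) (Multiplicative ℤ)
  let mΨ : G →* A :=
    { toFun := fun s => MonoidAlgebra.single (Multiplicative.ofAdd (deg s))
        (MonoidAlgebra.of ℤ G s)
      map_one' := by
        show MonoidAlgebra.single (Multiplicative.ofAdd (deg 1)) (MonoidAlgebra.of ℤ G 1) = 1
        have hd1 : deg 1 = 0 := by
          have := degmul 1 1
          simpa using this
        rw [hd1, map_one, MonoidAlgebra.one_def]
        rfl
      map_mul' := by
        intro x y
        show MonoidAlgebra.single _ _ = MonoidAlgebra.single _ _ * MonoidAlgebra.single _ _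
        rw [MonoidAlgebra.single_mul_single]
        congr 1
        · rw [degmul]; rfl
        · exact map_mul _ x y }
  let Ψ : R →ₐ[ℤ] A := MonoidAlgebra.lift ℤ A G mΨ
  let Θ : A →ₐ[R] R := MonoidAlgebra.lift R R (Multiplicative ℤ) 1
  have ΘΨ : ∀ x : R, Θ (Ψ x) = x := by
    have : (Θ.toRingHom.comp Ψ.toRingHom) = RingHom.id R := by
      apply MonoidAlgebra.ringHom_ext
      · intro c
        simp only [RingHom.coe_comp, Function.comp_apply, AlgHom.toRingHom_eq_coe,
          RingHom.coe_coe, RingHom.id_apply]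
        have h1 : (MonoidAlgebra.single (1 : G) c : R) = c • (1 : R) := by
          rw [MonoidAlgebra.one_def, MonoidAlgebra.smul_single']
          simp
        rw [h1, map_zsmul, map_zsmul, map_one, map_one]
        rfl
      · intro s
        simp only [RingHom.coe_comp, Function.comp_apply, AlgHom.toRingHom_eq_coe,
          RingHom.coe_coe, RingHom.id_apply]
        have h1 : Ψ (MonoidAlgebra.single s (1:ℤ)) = MonoidAlgebra.single
            (Multiplicative.ofAdd (deg s)) (MonoidAlgebra.of ℤ G s) := by
          rw [show Ψ (MonoidAlgebra.single s (1:ℤ))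
              = MonoidAlgebra.lift ℤ A G mΨ (MonoidAlgebra.single s (1:ℤ)) from rfl,
            MonoidAlgebra.lift_single, one_smul]
          rfl
        rw [h1]
        rw [show Θ (MonoidAlgebra.single (Multiplicative.ofAdd (deg s))
              (MonoidAlgebra.of ℤ G s))
            = MonoidAlgebra.lift R R (Multiplicative ℤ) 1
              (MonoidAlgebra.single (Multiplicative.ofAdd (deg s))
                (MonoidAlgebra.of ℤ G s)) from rfl,
          MonoidAlgebra.lift_single]
        simp [MonoidAlgebra.of_apply]
        rfl
    exact fun x => RingHom.congr_fun this x
  -- the main argument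
  intro d hd1 hd2
  obtain ⟨q1, hq1⟩ := hd1
  obtain ⟨q2, hq2⟩ := hd2
  have hg1 : g ≠ 1 := by
    intro hg
    exact one_ne_zero (hrank 1 0 (by simp [hg])).1
  have hr0 : (1 : R) - MonoidAlgebra.of ℤ G g ≠ 0 := by
    intro h0
    have h1 : (1 : R) = MonoidAlgebra.of ℤ G g := by rwa [sub_eq_zero] at h0
    have h2 := Finsupp.ext_iff.mp (congrArg MonoidAlgebra.coeff h1) g
    rw [MonoidAlgebra.one_def] at h2
    simp [MonoidAlgebra.of_apply, Finsupp.single_apply, Ne.symm hg1] at h2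
  have hΨof : ∀ s : G, Ψ (MonoidAlgebra.of ℤ G s)
      = MonoidAlgebra.single (Multiplicative.ofAdd (deg s)) (MonoidAlgebra.of ℤ G s) := by
    intro s
    rw [show Ψ (MonoidAlgebra.of ℤ G s)
        = MonoidAlgebra.lift ℤ A G mΨ (MonoidAlgebra.single s (1:ℤ)) from rfl,
      MonoidAlgebra.lift_single, one_smul]
    rfl
  have hΨg : Ψ ((1:R) - MonoidAlgebra.of ℤ G g)
      = MonoidAlgebra.single (1 : Multiplicative ℤ) ((1:R) - MonoidAlgebra.of ℤ G g) := by
    rw [map_sub, map_one, hΨof g]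
    rw [show Multiplicative.ofAdd (deg g) = (1 : Multiplicative ℤ) by rw [degg]; rfl]
    rw [MonoidAlgebra.one_def (R := R) (M := Multiplicative ℤ)]
    rw [← MonoidAlgebra.single_sub]
  have hmulg : Ψ d * Ψ q1
      = MonoidAlgebra.single (1 : Multiplicative ℤ) ((1:R) - MonoidAlgebra.of ℤ G g) := by
    rw [← map_mul, ← hq1, hΨg]
  obtain ⟨c, p, hcp⟩ := eq_single_of_mul_eq_single hr0 hmulg
  have hdp : d = p := by
    have hx := ΘΨ d
    rw [hcp] at hx
    rw [show Θ (MonoidAlgebra.single c p) = MonoidAlgebra.lift R R (Multiplicative ℤ) 1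
        (MonoidAlgebra.single c p) from rfl, MonoidAlgebra.lift_single] at hx
    simpa using hx.symm
  have hΨh : Ψ ((1:R) - MonoidAlgebra.of ℤ G h) = 1
      - MonoidAlgebra.single (Multiplicative.ofAdd (deg h)) (MonoidAlgebra.of ℤ G h) := by
    rw [map_sub, map_one, hΨof h]
  have key : MonoidAlgebra.single c d * Ψ q2 = 1
      - MonoidAlgebra.single (Multiplicative.ofAdd (deg h)) (MonoidAlgebra.of ℤ G h) := by
    rw [show (MonoidAlgebra.single c d : A) = Ψ d by rw [hcp, hdp], ← map_mul, ← hq2, hΨh]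
  have hcoeff := Finsupp.ext_iff.mp (congrArg MonoidAlgebra.coeff key) (1 : Multiplicative ℤ)
  rw [MonoidAlgebra.coeff_single_mul_apply] at hcoeff
  have hne : Multiplicative.ofAdd (deg h) ≠ (1 : Multiplicative ℤ) := by
    simpa using degh
  rw [MonoidAlgebra.coeff_sub, Finsupp.sub_apply, MonoidAlgebra.one_def, MonoidAlgebra.coeff_single,
    Finsupp.single_apply, MonoidAlgebra.coeff_single, Finsupp.single_apply, if_pos rfl, if_neg hne, sub_zero] at hcoeff
  exact IsUnit.of_mul_eq_one (a := d) _ hcoeff
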